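/- Let a ∈ (0,1), ζ > −1, and let h : (0,∞) → (0,∞) be differentiable, bounded above, bounded below by a positive constant, and satisfy h(at) = h(t) for all t > 0. Define h̃(t) = (−log a) · ∫_0^∞ a^{r(1+ζ)} h(a^r t) dr for t > 0. Then lim_{t→∞} ( ∫_1^t s^ζ h(s) ds ) / ( t^{ζ+1} h̃(t) ) = 1. Moreover h̃(at) = h̃(t) for all t > 0, and h̃ is bounded above and bounded below by a positive constant. -/
import Mathlib


open MeasureTheory Filter Topology

theorem stmt4 (a ζ : ℝ) (ha0 : 0 < a) (ha1 : a < 1) (hζ : -1 < ζ)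
    (h : ℝ → ℝ) (hpos : ∀ t > 0, 0 < h t)
    (hdiff : DifferentiableOn ℝ h (Set.Ioi 0))
    (hub : ∃ M : ℝ, ∀ t > 0, h t ≤ M)
    (hlb : ∃ m : ℝ, 0 < m ∧ ∀ t > 0, m ≤ h t)
    (hper : ∀ t > 0, h (a * t) = h t)
    (htilde : ℝ → ℝ)
    (htdef : ∀ t > 0, htilde t =
      (-Real.log a) * ∫ r in Set.Ioi (0:ℝ), a ^ (r * (1 + ζ)) * h (a ^ r * t)) :
    Tendsto (fun t : ℝ => (∫ s in (1:ℝ)..t, s ^ ζ * h s) / (t ^ (ζ + 1) * htilde t))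
      atTop (𝓝 1) ∧
    (∀ t > 0, htilde (a * t) = htilde t) ∧
    (∃ M : ℝ, ∀ t > 0, htilde t ≤ M) ∧
    (∃ m : ℝ, 0 < m ∧ ∀ t > 0, m ≤ htilde t) := by
  obtain ⟨M, hM⟩ := hub
  obtain ⟨m, hm0, hm⟩ := hlb
  set c := Real.log a with hcdef
  have hc : c < 0 := Real.log_neg ha0 ha1
  have h1ζ : 0 < 1 + ζ := by linarith
  have hb : 0 < -(c * (1 + ζ)) := by nlinarith
  have hcont : ContinuousOn h (Set.Ioi 0) := hdiff.continuousOn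
  -- rewrite htilde in exp form
  have hrw : ∀ t > 0, htilde t = (-c) * ∫ r in Set.Ioi (0:ℝ),
      Real.exp (c * (r * (1 + ζ))) * h (Real.exp (c * r) * t) := by
    intro t ht
    rw [htdef t ht]
    congr 1
    refine setIntegral_congr_fun measurableSet_Ioi fun r _ => ?_
    rw [Real.rpow_def_of_pos ha0, Real.rpow_def_of_pos ha0]
  -- integrability of the htilde integrand
  have hint : ∀ t > 0, IntegrableOn
      (fun r => Real.exp (c * (r * (1 + ζ))) * h (Real.exp (c * r) * t)) (Set.Ioi 0) := by
    intro t ht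
    have hcomp : Continuous fun r => h (Real.exp (c * r) * t) :=
      hcont.comp_continuous (by continuity) (fun r => mul_pos (Real.exp_pos _) ht)
    refine Integrable.mono' ((exp_neg_integrableOn_Ioi 0 hb).const_mul M) ?_ ?_
    · exact ((Real.continuous_exp.comp (by continuity)).mul hcomp).aestronglyMeasurable.restrict
    · refine Filter.Eventually.of_forall fun r => ?_
      have h1 : 0 < h (Real.exp (c * r) * t) := hpos _ (mul_pos (Real.exp_pos _) ht)
      have h2 : h (Real.exp (c * r) * t) ≤ M := hM _ (mul_pos (Real.exp_pos _) ht)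
      rw [Real.norm_eq_abs, abs_of_nonneg (by positivity)]
      have he : -(-(c * (1 + ζ))) * r = c * (r * (1 + ζ)) := by ring
      rw [he]
      calc Real.exp (c * (r * (1 + ζ))) * h (Real.exp (c * r) * t)
          ≤ Real.exp (c * (r * (1 + ζ))) * M :=
            mul_le_mul_of_nonneg_left h2 (Real.exp_pos _).le
        _ = M * Real.exp (c * (r * (1 + ζ))) := by ring
  -- value of the pure exponential integral
  have hEint : IntegrableOn (fun r : ℝ => Real.exp (c * (r * (1 + ζ)))) (Set.Ioi 0) := by
    have := exp_neg_integrableOn_Ioi 0 hb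
    refine this.congr_fun (fun r _ => ?_) measurableSet_Ioi
    congr 1; ring
  have hEval : ∫ r in Set.Ioi (0:ℝ), Real.exp (c * (r * (1 + ζ))) = (-(c * (1 + ζ)))⁻¹ := by
    have h2 : ∫ x in Set.Ioi (0:ℝ), Real.exp (-((-(c * (1 + ζ))) * x)) = (-(c * (1 + ζ)))⁻¹ := by
      have := integral_comp_mul_left_Ioi (fun x => Real.exp (-x)) 0 hb
      simp only [mul_zero, integral_exp_neg_Ioi_zero, smul_eq_mul, mul_one] at this
      exact this
    rw [← h2]
    refine setIntegral_congr_fun measurableSet_Ioi fun r _ => ?_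
    congr 1; ring
  have hcne : (-c) ≠ 0 := (neg_pos.mpr hc).ne'
  have hconst : ∀ x : ℝ, (-c) * (x * (-(c * (1 + ζ)))⁻¹) = x / (1 + ζ) := by
    intro x
    rw [show -(c * (1 + ζ)) = (-c) * (1 + ζ) from by ring, mul_inv, div_eq_mul_inv,
      show (-c) * (x * ((-c)⁻¹ * (1 + ζ)⁻¹)) = ((-c) * (-c)⁻¹) * (x * (1 + ζ)⁻¹) from by ring,
      mul_inv_cancel₀ hcne, one_mul]
  -- bounds for htilde
  have hub' : ∀ t > 0, htilde t ≤ M / (1 + ζ) := by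
    intro t ht
    rw [hrw t ht]
    have hle : ∫ r in Set.Ioi (0:ℝ), Real.exp (c * (r * (1 + ζ))) * h (Real.exp (c * r) * t)
        ≤ ∫ r in Set.Ioi (0:ℝ), M * Real.exp (c * (r * (1 + ζ))) := by
      refine setIntegral_mono_on (hint t ht) (hEint.const_mul M) measurableSet_Ioi
        fun r _ => ?_
      have h2 : h (Real.exp (c * r) * t) ≤ M := hM _ (mul_pos (Real.exp_pos _) ht)
      calc Real.exp (c * (r * (1 + ζ))) * h (Real.exp (c * r) * t)
          ≤ Real.exp (c * (r * (1 + ζ))) * M :=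
            mul_le_mul_of_nonneg_left h2 (Real.exp_pos _).le
        _ = M * Real.exp (c * (r * (1 + ζ))) := by ring
    calc (-c) * ∫ r in Set.Ioi (0:ℝ), Real.exp (c * (r * (1 + ζ))) * h (Real.exp (c * r) * t)
        ≤ (-c) * ∫ r in Set.Ioi (0:ℝ), M * Real.exp (c * (r * (1 + ζ))) :=
          mul_le_mul_of_nonneg_left hle (by linarith)
      _ = M / (1 + ζ) := by
          rw [MeasureTheory.integral_const_mul, hEval, hconst]
  have hlb' : ∀ t > 0, m / (1 + ζ) ≤ htilde t := by
    intro t ht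
    rw [hrw t ht]
    have hle : ∫ r in Set.Ioi (0:ℝ), m * Real.exp (c * (r * (1 + ζ)))
        ≤ ∫ r in Set.Ioi (0:ℝ), Real.exp (c * (r * (1 + ζ))) * h (Real.exp (c * r) * t) := by
      refine setIntegral_mono_on (hEint.const_mul m) (hint t ht) measurableSet_Ioi
        fun r _ => ?_
      have h2 : m ≤ h (Real.exp (c * r) * t) := hm _ (mul_pos (Real.exp_pos _) ht)
      calc m * Real.exp (c * (r * (1 + ζ)))
          = Real.exp (c * (r * (1 + ζ))) * m := by ring
        _ ≤ Real.exp (c * (r * (1 + ζ))) * h (Real.exp (c * r) * t) :=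
            mul_le_mul_of_nonneg_left h2 (Real.exp_pos _).le
    calc m / (1 + ζ)
        = (-c) * ∫ r in Set.Ioi (0:ℝ), m * Real.exp (c * (r * (1 + ζ))) := by
          rw [MeasureTheory.integral_const_mul, hEval, hconst]
      _ ≤ (-c) * ∫ r in Set.Ioi (0:ℝ), Real.exp (c * (r * (1 + ζ))) * h (Real.exp (c * r) * t) :=
          mul_le_mul_of_nonneg_left hle (by linarith)
  -- periodicity of htilde
  have hper' : ∀ t > 0, htilde (a * t) = htilde t := by
    intro t ht
    rw [htdef _ (mul_pos ha0 ht), htdef _ ht]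
    congr 1
    refine setIntegral_congr_fun measurableSet_Ioi fun r _ => ?_
    have harg : a ^ r * (a * t) = a * (a ^ r * t) := by ring
    rw [harg, hper _ (mul_pos (Real.rpow_pos_of_pos ha0 r) ht)]
  -- change of variables: key identity
  have hkey : ∀ t > 0, ∫ x in Set.Ioo (0:ℝ) t, x ^ ζ * h x = t ^ (ζ + 1) * htilde t := by
    intro t ht
    rw [hrw t ht]
    have hderiv : ∀ r ∈ Set.Ioi (0:ℝ), HasDerivWithinAt (fun x => t * Real.exp (c * x))
        (t * Real.exp (c * r) * c) (Set.Ioi 0) r := fun r _ => by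
      simpa [mul_assoc] using (((hasDerivAt_id r).const_mul c).exp.const_mul t).hasDerivWithinAt
    have hinj : Set.InjOn (fun x => t * Real.exp (c * x)) (Set.Ioi 0) := by
      intro x _ y _ hxy
      simp only at hxy
      exact mul_left_cancel₀ hc.ne (Real.exp_eq_exp.mp (mul_left_cancel₀ ht.ne' hxy))
    have himg : (fun x => t * Real.exp (c * x)) '' (Set.Ioi 0) = Set.Ioo 0 t := by
      ext x
      simp only [Set.mem_image, Set.mem_Ioi, Set.mem_Ioo]
      constructor
      · rintro ⟨r, hr, rfl⟩
        refine ⟨by positivity, ?_⟩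
        have : Real.exp (c * r) < 1 := Real.exp_lt_one_iff.mpr (mul_neg_of_neg_of_pos hc hr)
        exact mul_lt_of_lt_one_right ht this
      · rintro ⟨hx0, hxt⟩
        refine ⟨Real.log (x / t) / c, ?_, ?_⟩
        · have hlog : Real.log (x / t) < 0 :=
            Real.log_neg (div_pos hx0 ht) ((div_lt_one ht).mpr hxt)
          exact div_pos_of_neg_of_neg hlog hc
        · have : c * (Real.log (x / t) / c) = Real.log (x / t) := mul_div_cancel₀ _ hc.ne
          rw [this, Real.exp_log (div_pos hx0 ht), mul_div_cancel₀ _ ht.ne']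
    have key := integral_image_eq_integral_abs_deriv_smul measurableSet_Ioi hderiv hinj
      (fun x => x ^ ζ * h x)
    rw [himg] at key
    rw [key, show t ^ (ζ + 1) * ((-c) * ∫ r in Set.Ioi (0:ℝ),
        Real.exp (c * (r * (1 + ζ))) * h (Real.exp (c * r) * t))
      = (t ^ (ζ + 1) * (-c)) * ∫ r in Set.Ioi (0:ℝ),
        Real.exp (c * (r * (1 + ζ))) * h (Real.exp (c * r) * t) from by ring,
      ← MeasureTheory.integral_const_mul]
    refine setIntegral_congr_fun measurableSet_Ioi fun r _ => ?_
    have habs : |t * Real.exp (c * r) * c| = t * Real.exp (c * r) * (-c) := by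
      rw [abs_of_neg (mul_neg_of_pos_of_neg (by positivity) hc)]; ring
    have hmul : (t * Real.exp (c * r)) ^ ζ = t ^ ζ * Real.exp (c * r * ζ) := by
      rw [Real.mul_rpow ht.le (Real.exp_pos _).le, ← Real.exp_mul]
    have hsplit : t ^ (ζ + 1) = t ^ ζ * t := by rw [Real.rpow_add ht, Real.rpow_one]
    have hexp : Real.exp (c * (r * (1 + ζ))) = Real.exp (c * r) * Real.exp (c * r * ζ) := by
      rw [← Real.exp_add]; ring_nf
    simp only [smul_eq_mul]
    rw [habs, hmul, hsplit, hexp, mul_comm t (Real.exp (c * r))]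
    ring
  -- integrability of s^ζ h s on Ioc 0 T
  have hIoc : ∀ T > 0, IntegrableOn (fun s => s ^ ζ * h s) (Set.Ioc (0:ℝ) T) := by
    intro T hT
    have hrpow : IntegrableOn (fun s : ℝ => M * s ^ ζ) (Set.Ioc (0:ℝ) T) :=
      ((intervalIntegral.intervalIntegrable_rpow' hζ (a := 0) (b := T)).1).const_mul M
    refine Integrable.mono' hrpow ?_ ?_
    · refine ContinuousOn.aestronglyMeasurable ?_ measurableSet_Ioc
      refine ContinuousOn.mul ?_ (hcont.mono fun x hx => hx.1)
      exact fun x hx => (Real.continuousAt_rpow_const x ζ (Or.inl hx.1.ne')).continuousWithinAt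
    · rw [ae_restrict_iff' measurableSet_Ioc]
      refine Filter.Eventually.of_forall fun s hs => ?_
      have h1 := hpos s hs.1
      have h2 := hM s hs.1
      have h3 : (0:ℝ) < s ^ ζ := Real.rpow_pos_of_pos hs.1 ζ
      rw [Real.norm_eq_abs, abs_of_nonneg (by positivity)]
      nlinarith
  -- splitting the interval integral
  have hP : htilde 1 = ∫ x in Set.Ioo (0:ℝ) 1, x ^ ζ * h x := by
    have := hkey 1 one_pos
    rw [Real.one_rpow, one_mul] at this
    exact this.symm
  have hsplit : ∀ t, 1 ≤ t → ∫ s in (1:ℝ)..t, s ^ ζ * h s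
      = t ^ (ζ + 1) * htilde t - htilde 1 := by
    intro t ht1
    have ht : (0:ℝ) < t := lt_of_lt_of_le one_pos ht1
    have i1 : IntervalIntegrable (fun s => s ^ ζ * h s) volume 0 1 :=
      (intervalIntegrable_iff_integrableOn_Ioc_of_le zero_le_one).2 (hIoc 1 one_pos)
    have it : IntervalIntegrable (fun s => s ^ ζ * h s) volume 0 t :=
      (intervalIntegrable_iff_integrableOn_Ioc_of_le ht.le).2 (hIoc t ht)
    have heq := intervalIntegral.integral_interval_sub_left it i1
    rw [← heq, intervalIntegral.integral_of_le ht.le, intervalIntegral.integral_of_le zero_le_one,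
      MeasureTheory.integral_Ioc_eq_integral_Ioo, MeasureTheory.integral_Ioc_eq_integral_Ioo,
      hkey t ht, hP]
  -- the limit
  have hm' : 0 < m / (1 + ζ) := div_pos hm0 h1ζ
  have hmne : m / (1 + ζ) ≠ 0 := hm'.ne'
  have hP0 : 0 < htilde 1 := lt_of_lt_of_le hm' (hlb' 1 one_pos)
  have h0 : Tendsto (fun t : ℝ => htilde 1 / (t ^ (ζ + 1) * htilde t)) atTop (𝓝 0) := by
    have hg : Tendsto (fun t : ℝ => (htilde 1 / (m / (1 + ζ))) * t ^ (-(1 + ζ)))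
        atTop (𝓝 0) := by
      have := (tendsto_rpow_neg_atTop h1ζ).const_mul (htilde 1 / (m / (1 + ζ)))
      rwa [mul_zero] at this
    refine squeeze_zero' ?_ ?_ hg
    · filter_upwards [eventually_ge_atTop (1:ℝ)] with t ht1
      have ht : (0:ℝ) < t := lt_of_lt_of_le one_pos ht1
      have hD : 0 < t ^ (ζ + 1) * htilde t :=
        mul_pos (Real.rpow_pos_of_pos ht _) (lt_of_lt_of_le hm' (hlb' t ht))
      positivity
    · filter_upwards [eventually_ge_atTop (1:ℝ)] with t ht1
      have ht : (0:ℝ) < t := lt_of_lt_of_le one_pos ht1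
      have htp : 0 < t ^ (ζ + 1) := Real.rpow_pos_of_pos ht _
      have hD : 0 < t ^ (ζ + 1) * (m / (1 + ζ)) := mul_pos htp hm'
      have hDle : t ^ (ζ + 1) * (m / (1 + ζ)) ≤ t ^ (ζ + 1) * htilde t :=
        mul_le_mul_of_nonneg_left (hlb' t ht) htp.le
      calc htilde 1 / (t ^ (ζ + 1) * htilde t)
          ≤ htilde 1 / (t ^ (ζ + 1) * (m / (1 + ζ))) :=
            div_le_div_of_nonneg_left hP0.le hD hDle
        _ = (htilde 1 / (m / (1 + ζ))) * t ^ (-(1 + ζ)) := by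
            rw [Real.rpow_neg ht.le, show ζ + 1 = 1 + ζ from add_comm ζ 1]
            rw [eq_comm, div_mul_eq_mul_div, div_mul_eq_div_div, div_div,
              div_eq_div_iff (by positivity) (by positivity)]
            rw [mul_assoc, inv_mul_cancel_left₀ (Real.rpow_pos_of_pos ht (1 + ζ)).ne']
  have hlim : Tendsto (fun t : ℝ =>
      (∫ s in (1:ℝ)..t, s ^ ζ * h s) / (t ^ (ζ + 1) * htilde t)) atTop (𝓝 1) := by
    have h1 : Tendsto (fun t : ℝ => 1 - htilde 1 / (t ^ (ζ + 1) * htilde t)) atTop (𝓝 1) := by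
      have := h0.const_sub 1
      rwa [sub_zero] at this
    refine h1.congr' ?_
    filter_upwards [eventually_ge_atTop (1:ℝ)] with t ht1
    have ht : (0:ℝ) < t := lt_of_lt_of_le one_pos ht1
    have hD : 0 < t ^ (ζ + 1) * htilde t :=
      mul_pos (Real.rpow_pos_of_pos ht _) (lt_of_lt_of_le hm' (hlb' t ht))
    rw [hsplit t ht1, sub_div, div_self hD.ne']
  exact ⟨hlim, hper', ⟨M / (1 + ζ), hub'⟩, ⟨m / (1 + ζ), hm', hlb'⟩⟩
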